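/- arXiv:1011.3262 — 2 statements merged into one kernel-verified Lean document; each statement's English description precedes it below -/
import Mathlib

section
/- Let x_1, ..., x_n be real numbers such that no two distinct nonempty subsets of {x_1,...,x_n} have the same arithmetic mean. Extend cyclically by x_{k+n} = x_k. Then there is a unique index k* with 1 ≤ k* ≤ n such that the partial sums of the cyclically shifted sequence (x_{k*}, x_{k*+1}, ..., x_{k*+n-1}) lie below the chord joining the start and end points, i.e., for all 1 ≤ m ≤ n-1, (1/m)·∑_{i=0}^{m-1} x_{k*+i} ≤ (1/n)·∑_{i=1}^{n} x_i. -/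
open Finset

theorem stmt_0 (n : ℕ) (hn : 0 < n) (x : Fin n → ℝ)
    (hA : ∀ S T : Finset (Fin n), S.Nonempty → T.Nonempty → S ≠ T →
      (∑ i ∈ S, x i) / S.card ≠ (∑ i ∈ T, x i) / T.card) :
    ∃! k : Fin n, ∀ m : ℕ, 1 ≤ m → m ≤ n - 1 →
      (∑ i ∈ Finset.range m, x (⟨(k.val + i) % n, Nat.mod_lt _ hn⟩)) / m
        ≤ (∑ i, x i) / n := by
  classical
  haveI : Nonempty (Fin n) := ⟨⟨0, hn⟩⟩
  set A : ℝ := (∑ i, x i) / n with hAdef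
  set f : ℕ → ℝ := fun i => x ⟨i % n, Nat.mod_lt _ hn⟩ - A with hf
  set Q : ℕ → ℝ := fun j => ∑ i ∈ range j, f i with hQ
  have hnA : (n : ℝ) * A = ∑ i, x i := by
    rw [hAdef, mul_div_cancel₀]
    exact_mod_cast hn.ne'
  -- injectivity of the cyclic map on windows of length ≤ n
  have hinj : ∀ (k m : ℕ), m ≤ n → ∀ i ∈ range m, ∀ j ∈ range m,
      ((⟨(k + i) % n, Nat.mod_lt _ hn⟩ : Fin n) = ⟨(k + j) % n, Nat.mod_lt _ hn⟩) → i = j := by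
    intro k m hm i hi j hj h
    simp only [mem_range] at hi hj
    have h' : (k + i) % n = (k + j) % n := congrArg Fin.val h
    have h2 : i ≡ j [MOD n] := Nat.ModEq.add_left_cancel' k h'
    rwa [Nat.ModEq, Nat.mod_eq_of_lt (lt_of_lt_of_le hi hm),
      Nat.mod_eq_of_lt (lt_of_lt_of_le hj hm)] at h2
  -- window sum in terms of Q
  have hQadd : ∀ k m : ℕ,
      Q (k + m) = Q k + ((∑ i ∈ range m, x ⟨(k + i) % n, Nat.mod_lt _ hn⟩) - m * A) := by
    intro k m
    rw [hQ]
    simp only [Finset.sum_range_add]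
    congr 1
    rw [hf]
    simp [Finset.sum_sub_distrib, Finset.card_range, mul_comm]
  -- periodicity
  have hQper : ∀ j : ℕ, Q (j + n) = Q j := by
    intro j
    rw [hQadd j n]
    have hS : (range n).image (fun i => (⟨(j + i) % n, Nat.mod_lt _ hn⟩ : Fin n)) = univ := by
      apply Finset.eq_univ_of_card
      rw [Finset.card_image_of_injOn (hinj j n le_rfl), Finset.card_range, Fintype.card_fin]
    have : ∑ i ∈ range n, x ⟨(j + i) % n, Nat.mod_lt _ hn⟩ = ∑ i, x i := by
      rw [← Finset.sum_image (hinj j n le_rfl) (f := x), hS]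
    rw [this]
    rw [← hnA]; ring
  have hQmod : ∀ j : ℕ, Q j = Q (j % n) := by
    intro j
    induction j using Nat.strong_induction_on with
    | _ j ih =>
      rcases lt_or_ge j n with h | h
      · rw [Nat.mod_eq_of_lt h]
      · have hj : j = (j - n) + n := by omega
        rw [hj, hQper, ih (j - n) (by omega), Nat.add_mod_right]
  -- strict inequality from hA
  have hstrict : ∀ (k m : ℕ), 1 ≤ m → m ≤ n - 1 →
      (∑ i ∈ range m, x ⟨(k + i) % n, Nat.mod_lt _ hn⟩) / m ≤ A →
      (∑ i ∈ range m, x ⟨(k + i) % n, Nat.mod_lt _ hn⟩) < m * A := by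
    intro k m hm1 hm2 hle
    set S : Finset (Fin n) := (range m).image (fun i => (⟨(k + i) % n, Nat.mod_lt _ hn⟩ : Fin n))
      with hSdef
    have hmn : m ≤ n := by omega
    have hcard : S.card = m := by
      rw [hSdef, Finset.card_image_of_injOn (hinj k m hmn), Finset.card_range]
    have hsum : ∑ i ∈ S, x i = ∑ i ∈ range m, x ⟨(k + i) % n, Nat.mod_lt _ hn⟩ :=
      Finset.sum_image (hinj k m hmn)
    have hSne : S ≠ univ := by
      intro h
      have := hcard
      rw [h, Finset.card_univ, Fintype.card_fin] at this
      omega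
    have hSnon : S.Nonempty := by
      rw [← Finset.card_pos, hcard]; omega
    have hne := hA S univ hSnon Finset.univ_nonempty hSne
    rw [hsum, hcard, Finset.card_univ, Fintype.card_fin] at hne
    have hne' : (∑ i ∈ range m, x ⟨(k + i) % n, Nat.mod_lt _ hn⟩) / m ≠ A := hne
    have hmpos : (0 : ℝ) < m := by exact_mod_cast hm1
    have hlt : (∑ i ∈ range m, x ⟨(k + i) % n, Nat.mod_lt _ hn⟩) / m < A :=
      lt_of_le_of_ne hle hne'
    calc (∑ i ∈ range m, x ⟨(k + i) % n, Nat.mod_lt _ hn⟩)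
        = ((∑ i ∈ range m, x ⟨(k + i) % n, Nat.mod_lt _ hn⟩) / m) * m := by
          field_simp
      _ < A * m := by exact mul_lt_mul_of_pos_right hlt hmpos
      _ = m * A := mul_comm _ _
  -- choose maximizer of Q on range n
  obtain ⟨b, hb, hmax⟩ := Finset.exists_max_image (range n) Q ⟨0, mem_range.mpr hn⟩
  have hbn : b < n := mem_range.mp hb
  have hmax' : ∀ j : ℕ, Q j ≤ Q b := by
    intro j
    rw [hQmod j]
    exact hmax _ (mem_range.mpr (Nat.mod_lt _ hn))
  refine ⟨⟨b, hbn⟩, ?_, ?_⟩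
  · -- existence
    intro m hm1 hm2
    have h1 : Q (b + m) ≤ Q b := hmax' (b + m)
    rw [hQadd b m] at h1
    have h2 : (∑ i ∈ range m, x ⟨(b + i) % n, Nat.mod_lt _ hn⟩) ≤ m * A := by linarith
    have hmpos : (0 : ℝ) < m := by exact_mod_cast hm1
    show (∑ i ∈ range m, x ⟨(b + i) % n, Nat.mod_lt _ hn⟩) / m ≤ A
    rw [div_le_iff₀ hmpos]
    linarith
  · -- uniqueness
    intro y hy
    by_contra hne
    have hab : y.val ≠ b := fun h => hne (Fin.ext h)
    set a := y.val with ha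
    have han : a < n := y.isLt
    set d : ℕ := if a < b then b - a else n - (a - b) with hd
    have hd1 : 1 ≤ d := by rw [hd]; split_ifs <;> omega
    have hd2 : d ≤ n - 1 := by rw [hd]; split_ifs <;> omega
    have he1 : 1 ≤ n - d := by rw [hd]; split_ifs <;> omega
    have he2 : n - d ≤ n - 1 := by rw [hd]; split_ifs <;> omega
    have hmod1 : (a + d) % n = b := by
      rcases lt_or_ge a b with h | h
      · have : a + d = b := by rw [hd]; split_ifs <;> omega
        rw [this, Nat.mod_eq_of_lt hbn]
      · have : a + d = n + b := by rw [hd]; split_ifs <;> omega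
        rw [this, Nat.add_mod_left, Nat.mod_eq_of_lt hbn]
    have hmod2 : (b + (n - d)) % n = a := by
      rcases lt_or_ge a b with h | h
      · have : b + (n - d) = n + a := by rw [hd]; split_ifs <;> omega
        rw [this, Nat.add_mod_left, Nat.mod_eq_of_lt han]
      · have : b + (n - d) = a := by rw [hd]; split_ifs <;> omega
        rw [this, Nat.mod_eq_of_lt han]
    -- strict inequalities for both windows
    have hy' : (∑ i ∈ range d, x ⟨(a + i) % n, Nat.mod_lt _ hn⟩) / d ≤ A := hy d hd1 hd2
    have hb' : (∑ i ∈ range (n - d), x ⟨(b + i) % n, Nat.mod_lt _ hn⟩) / ((n - d : ℕ) : ℝ) ≤ A := by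
      have h1 : Q (b + (n - d)) ≤ Q b := hmax' _
      rw [hQadd b (n - d)] at h1
      have hmpos : (0 : ℝ) < ((n - d : ℕ) : ℝ) := by exact_mod_cast he1
      rw [div_le_iff₀ hmpos]
      linarith
    have hs1 := hstrict a d hd1 hd2 hy'
    have hs2 := hstrict b (n - d) he1 he2 hb'
    -- translate to Q
    have hQ1 : Q (a + d) < Q a := by rw [hQadd a d]; linarith
    have hQ2 : Q (b + (n - d)) < Q b := by rw [hQadd b (n - d)]; linarith
    rw [hQmod (a + d), hmod1] at hQ1
    rw [hQmod (b + (n - d)), hmod2] at hQ2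
    linarith
end

section
/- Let X_1,...,X_n be exchangeable random variables such that almost surely no two distinct nonempty subsets have the same arithmetic mean, and let S_j = X_1+...+X_j. Let (N_{n,1},...,N_{n,F_n}) be the composition of n given by the lengths of the faces of the concave majorant in order. Then for every composition (n_1,...,n_k) of n: P(F_n = k, N_{n,i} = n_i for 1 ≤ i ≤ k) = P(S_{n_1}^{(1)}/n_1 > S_{n_2}^{(2)}/n_2 > ··· > S_{n_k}^{(k)}/n_k) · ∏_{i=1}^k (1/n_i), where S_{n_i}^{(i)} = S_{n_1+···+n_i} − S_{n_1+···+n_{i−1}}. -/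
open Finset MeasureTheory ProbabilityTheory

namespace Stmt5X
noncomputable def pS (f : ℕ → ℝ) (j : ℕ) : ℝ := ∑ i ∈ Finset.Icc 1 j, f i
noncomputable def mn (f : ℕ → ℝ) (a b : ℕ) : ℝ := (pS f b - pS f a) / ((b : ℝ) - a)

/-- "generic position": all distinct nonempty subsets of `[1,n]` have distinct means -/
def Dg (n : ℕ) (f : ℕ → ℝ) : Prop :=
  ∀ S T : Finset ℕ, S ⊆ Finset.Icc 1 n → T ⊆ Finset.Icc 1 n →
    S.Nonempty → T.Nonempty → S ≠ T →
    (∑ i ∈ S, f i) / (S.card : ℝ) ≠ (∑ i ∈ T, f i) / (T.card : ℝ)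

/-- the contact set of the walk with its concave majorant -/
def CS (n : ℕ) (f : ℕ → ℝ) : Set ℕ :=
  {j | j ≤ n ∧ ∀ a b : ℕ, a ≤ j → j ≤ b → b ≤ n → a < b →
    ((b : ℝ) - j) * pS f a + ((j : ℝ) - a) * pS f b ≤ ((b : ℝ) - a) * pS f j}

lemma sub_pS (f : ℕ → ℝ) {a b : ℕ} (h : a ≤ b) :
    pS f b - pS f a = ∑ i ∈ Finset.Icc (a+1) b, f i := by
  unfold pS
  rw [show Finset.Icc 1 b = Finset.Icc 1 a ∪ Finset.Icc (a+1) b by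
    ext x; simp only [Finset.mem_union, Finset.mem_Icc]; omega]
  have hdisj : Disjoint (Finset.Icc 1 a) (Finset.Icc (a+1) b) := by
    rw [Finset.disjoint_left]
    intro x hx hx'
    simp only [Finset.mem_Icc] at hx hx'
    omega
  rw [Finset.sum_union hdisj]
  ring

lemma mn_eq_sum_div (f : ℕ → ℝ) {a b : ℕ} (h : a < b) :
    mn f a b = (∑ i ∈ Finset.Icc (a+1) b, f i) / ((Finset.Icc (a+1) b).card : ℝ) := by
  rw [mn, sub_pS f h.le, Nat.card_Icc]
  have h1 : b + 1 - (a+1) = b - a := by omega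
  rw [h1, Nat.cast_sub h.le]

lemma cast_sub_pos {a b : ℕ} (h : a < b) : (0:ℝ) < (b:ℝ) - (a:ℝ) := by
  have := (Nat.cast_lt (α := ℝ)).2 h
  linarith

lemma mn_key (f : ℕ → ℝ) {a b c : ℕ} (h1 : a < b) (h2 : b < c) :
    ((b:ℝ) - a) * (mn f a c - mn f a b) = ((c:ℝ) - b) * (mn f b c - mn f a c) := by
  have hba := cast_sub_pos h1
  have hcb := cast_sub_pos h2
  have hca := cast_sub_pos (h1.trans h2)
  unfold mn
  field_simp
  ring

lemma contact_iff (f : ℕ → ℝ) {a j b : ℕ} (ha : a < j) (hb : j < b) :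
    (((b:ℝ) - j) * pS f a + ((j:ℝ) - a) * pS f b ≤ ((b:ℝ) - a) * pS f j)
      ↔ mn f j b ≤ mn f a j := by
  have hja := cast_sub_pos ha
  have hbj := cast_sub_pos hb
  rw [mn, mn, div_le_div_iff₀ hbj hja]
  constructor <;> intro h <;> nlinarith

lemma mem_CS (n : ℕ) (f : ℕ → ℝ) (j : ℕ) :
    j ∈ CS n f ↔ j ≤ n ∧ ∀ a b : ℕ, a < j → j < b → b ≤ n → mn f j b ≤ mn f a j := by
  constructor
  · rintro ⟨hj, h⟩
    exact ⟨hj, fun a b ha hb hbn => (contact_iff f ha hb).1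
      (h a b ha.le hb.le hbn (ha.trans hb))⟩
  · rintro ⟨hj, h⟩
    refine ⟨hj, fun a b ha hb hbn hab => ?_⟩
    rcases eq_or_lt_of_le ha with rfl | ha'
    · simp
    rcases eq_or_lt_of_le hb with rfl | hb'
    · simp
    exact (contact_iff f ha' hb').2 (h a b ha' hb' hbn)

lemma Dg.mn_ne {n : ℕ} {f : ℕ → ℝ} (hD : Dg n f) {a b c d : ℕ}
    (hab : a < b) (hbn : b ≤ n) (hcd : c < d) (hdn : d ≤ n)
    (hne : a ≠ c ∨ b ≠ d) : mn f a b ≠ mn f c d := by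
  rw [mn_eq_sum_div f hab, mn_eq_sum_div f hcd]
  apply hD
  · intro x hx; simp only [Finset.mem_Icc] at hx ⊢; omega
  · intro x hx; simp only [Finset.mem_Icc] at hx ⊢; omega
  · rw [Finset.nonempty_Icc]; omega
  · rw [Finset.nonempty_Icc]; omega
  · intro h
    have h1 : a + 1 ∈ Finset.Icc (c+1) d := by rw [← h]; simp only [Finset.mem_Icc]; omega
    have h2 : c + 1 ∈ Finset.Icc (a+1) b := by rw [h]; simp only [Finset.mem_Icc]; omega
    have h3 : b ∈ Finset.Icc (c+1) d := by rw [← h]; simp only [Finset.mem_Icc]; omega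
    have h4 : d ∈ Finset.Icc (a+1) b := by rw [h]; simp only [Finset.mem_Icc]; omega
    simp only [Finset.mem_Icc] at h1 h2 h3 h4
    omega

def Pp (L : List ℕ) (i : ℕ) : ℕ := (L.take i).sum
def nb (L : List ℕ) (i : ℕ) : ℕ := L.getD i 0

section Blocks
variable {L : List ℕ} (hLpos : ∀ x ∈ L, 0 < x)

lemma Pp_zero : Pp L 0 = 0 := rfl

lemma Pp_len : Pp L L.length = L.sum := by simp [Pp]

lemma Pp_succ {i : ℕ} (h : i < L.length) : Pp L (i+1) = Pp L i + nb L i := by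
  rw [Pp, Pp, List.sum_take_succ L i h, nb, List.getD_eq_getElem L 0 h]

include hLpos in
lemma nb_pos {i : ℕ} (h : i < L.length) : 0 < nb L i := by
  rw [nb, List.getD_eq_getElem L 0 h]
  exact hLpos _ (List.getElem_mem h)

lemma Pp_mono : Monotone (Pp L) := by
  apply monotone_nat_of_le_succ
  intro i
  rcases lt_or_ge i L.length with h | h
  · rw [Pp_succ h]; omega
  · unfold Pp
    rw [List.take_of_length_le h, List.take_of_length_le (by omega)]

lemma Pp_le_sum (i : ℕ) : Pp L i ≤ L.sum := by
  rw [← Pp_len]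
  rcases le_or_gt i L.length with h | h
  · exact Pp_mono h
  · unfold Pp
    rw [List.take_of_length_le h.le, List.take_of_length_le le_rfl]

include hLpos in
lemma Pp_lt {i j : ℕ} (hij : i < j) (hj : j ≤ L.length) : Pp L i < Pp L j := by
  have h1 : Pp L (i+1) ≤ Pp L j := Pp_mono hij
  have h2 : i < L.length := by omega
  rw [Pp_succ h2] at h1
  have := nb_pos hLpos h2
  omega

end Blocks


def Tset (L : List ℕ) : Set ℕ := {m | ∃ i ≤ L.length, m = Pp L i}

def Bm (L : List ℕ) (f : ℕ → ℝ) : Prop :=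
  ∀ i, i + 1 < L.length → mn f (Pp L (i+1)) (Pp L (i+2)) < mn f (Pp L i) (Pp L (i+1))

def Vg (L : List ℕ) (i : ℕ) (f : ℕ → ℝ) : Prop :=
  ∀ j, Pp L i < j → j < Pp L (i+1) → mn f (Pp L i) j < mn f (Pp L i) (Pp L (i+1))

section Det

variable {n : ℕ} {L : List ℕ} {f : ℕ → ℝ}

lemma Pp_le_n (hLsum : L.sum = n) (i : ℕ) : Pp L i ≤ n := by
  rw [← hLsum]; exact Pp_le_sum i

lemma tail_ge (hLpos : ∀ x ∈ L, 0 < x) {i a : ℕ} (hi : i < L.length) (hV : Vg L i f)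
    (h1 : Pp L i ≤ a) (h2 : a < Pp L (i+1)) :
    mn f (Pp L i) (Pp L (i+1)) ≤ mn f a (Pp L (i+1)) := by
  rcases eq_or_lt_of_le h1 with rfl | h1'
  · exact le_refl _
  · have hV' := hV a h1' h2
    have key := mn_key f h1' h2
    nlinarith [cast_sub_pos h1', cast_sub_pos h2]

lemma A1 (hLpos : ∀ x ∈ L, 0 < x) (hB : Bm L f) (hV : ∀ i < L.length, Vg L i f) :
    ∀ i < L.length, ∀ a < Pp L (i+1), mn f (Pp L i) (Pp L (i+1)) ≤ mn f a (Pp L (i+1)) := by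
  intro i
  induction i with
  | zero =>
    intro hi a ha
    exact tail_ge hLpos hi (hV 0 hi) (by rw [Pp_zero]; omega) ha
  | succ i ih =>
    intro hi a ha
    rcases le_or_gt (Pp L (i+1)) a with h | h
    · exact tail_ge hLpos hi (hV _ hi) h ha
    · have hik : i < L.length := by omega
      have hP1 : Pp L (i+1) < Pp L (i+2) := Pp_lt hLpos (lt_add_one (i+1)) (by omega)
      have IH := ih hik a h
      have hBi := hB i hi
      have key := mn_key f h hP1
      nlinarith [cast_sub_pos h, cast_sub_pos hP1]

lemma A2 (hLpos : ∀ x ∈ L, 0 < x) (hLsum : L.sum = n) (hB : Bm L f)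
    (hV : ∀ i < L.length, Vg L i f) :
    ∀ d i, i < L.length → L.length - i ≤ d → ∀ b, Pp L i < b → b ≤ n →
      mn f (Pp L i) b ≤ mn f (Pp L i) (Pp L (i+1)) := by
  intro d
  induction d with
  | zero => intro i hi hd; omega
  | succ d ih =>
    intro i hi hd b hb1 hb2
    rcases lt_trichotomy b (Pp L (i+1)) with h | h | h
    · exact le_of_lt (hV i hi b hb1 h)
    · rw [h]
    · have hi1 : i + 1 < L.length := by
        by_contra hc
        have h2 := Pp_mono (L := L) (le_of_not_gt hc : L.length ≤ i+1)
        rw [Pp_len, hLsum] at h2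
        omega
      have hP1 : Pp L i < Pp L (i+1) := Pp_lt hLpos (lt_add_one i) (by omega)
      have IH := ih (i+1) hi1 (by omega) b h hb2
      have hBi := hB i hi1
      have key := mn_key f hP1 h
      nlinarith [cast_sub_pos hP1, cast_sub_pos h]

lemma mem1 (hLpos : ∀ x ∈ L, 0 < x) (hLsum : L.sum = n) (hB : Bm L f)
    (hV : ∀ i < L.length, Vg L i f) :
    ∀ i ≤ L.length, Pp L i ∈ CS n f := by
  intro i hik
  rw [mem_CS]
  refine ⟨Pp_le_n hLsum i, ?_⟩
  intro a b ha hb hbn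
  have hi0 : 0 < i := by
    rcases Nat.eq_zero_or_pos i with rfl | h
    · rw [Pp_zero] at ha; omega
    · exact h
  have hik' : i < L.length := by
    rcases eq_or_lt_of_le hik with rfl | h
    · exfalso; rw [Pp_len, hLsum] at hb; omega
    · exact h
  obtain ⟨i', rfl⟩ : ∃ i', i = i' + 1 := ⟨i - 1, by omega⟩
  have h1 : mn f (Pp L (i'+1)) b ≤ mn f (Pp L (i'+1)) (Pp L (i'+2)) :=
    A2 hLpos hLsum hB hV L.length (i'+1) hik' (by omega) b hb hbn
  have h2 := hB i' hik'
  have h3 : mn f (Pp L i') (Pp L (i'+1)) ≤ mn f a (Pp L (i'+1)) :=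
    A1 hLpos hB hV i' (by omega) a ha
  linarith

lemma mem2 (hLsum : L.sum = n) (hV : ∀ i < L.length, Vg L i f) :
    ∀ i < L.length, ∀ j, Pp L i < j → j < Pp L (i+1) → j ∉ CS n f := by
  intro i hi j h1 h2 hj
  have hP1n : Pp L (i+1) ≤ n := Pp_le_n hLsum (i+1)
  have hcond := ((mem_CS n f j).1 hj).2 (Pp L i) (Pp L (i+1)) h1 h2 hP1n
  have hVj := hV i hi j h1 h2
  have key := mn_key f h1 h2
  nlinarith [cast_sub_pos h1, cast_sub_pos h2]

lemma find_block (hLsum : L.sum = n) {j : ℕ} (hj : j ≤ n) (hjT : j ∉ Tset L) :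
    ∃ i < L.length, Pp L i < j ∧ j < Pp L (i+1) := by
  have key : ∀ d i, i < L.length → L.length - i ≤ d + 1 → Pp L i < j →
      ∃ s < L.length, Pp L s < j ∧ j < Pp L (s+1) := by
    intro d
    induction d with
    | zero =>
      intro i hi hd hPi
      have hil : i + 1 = L.length := by omega
      have hj1 : j ≤ Pp L (i+1) := by rw [hil, Pp_len, hLsum]; exact hj
      have hne : j ≠ Pp L (i+1) := fun h => hjT ⟨i+1, by omega, h⟩
      exact ⟨i, hi, hPi, by omega⟩
    | succ d ih =>
      intro i hi hd hPi
      rcases lt_or_ge j (Pp L (i+1)) with h | h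
      · exact ⟨i, hi, hPi, h⟩
      · have hne : j ≠ Pp L (i+1) := fun h' => hjT ⟨i+1, by omega, h'⟩
        have h' : Pp L (i+1) < j := by omega
        have hi1 : i + 1 < L.length := by
          by_contra hc
          have h2 := Pp_mono (L := L) (le_of_not_gt hc : L.length ≤ i+1)
          rw [Pp_len, hLsum] at h2
          omega
        exact ih (i+1) hi1 (by omega) h'
  have hj0 : 0 < j := by
    rcases Nat.eq_zero_or_pos j with rfl | h
    · exact absurd ⟨0, Nat.zero_le _, rfl⟩ hjT
    · exact h
  have h0 : 0 < L.length := by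
    by_contra h
    have : L = [] := List.length_eq_zero_iff.1 (by omega)
    rw [this] at hLsum
    simp at hLsum
    omega
  exact key L.length 0 h0 (by omega) (by rw [Pp_zero]; omega)

/-- the "only if" part: decreasing slopes and below-chord conditions imply
the contact set is exactly the set of block boundaries -/
lemma CS_eq_of (hLpos : ∀ x ∈ L, 0 < x) (hLsum : L.sum = n) (hB : Bm L f)
    (hV : ∀ i < L.length, Vg L i f) : CS n f = Tset L := by
  ext j
  constructor
  · intro hj
    by_contra hjT
    obtain ⟨i, hi, h1, h2⟩ := find_block hLsum hj.1 hjT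
    exact mem2 hLsum hV i hi j h1 h2 hj
  · rintro ⟨i, hik, rfl⟩
    exact mem1 hLpos hLsum hB hV i hik

lemma greedy (hD : Dg n f) {c : ℕ} (hc : c ∈ CS n f) (hcn : c < n) :
    ∃ v, c < v ∧ v ≤ n ∧ v ∈ CS n f ∧ (∀ w, c < w → w ≤ n → mn f c w ≤ mn f c v) ∧
      ∀ j, c < j → j < v → j ∉ CS n f := by
  obtain ⟨v, hv, hmax⟩ := Finset.exists_max_image (Finset.Icc (c+1) n) (fun w => mn f c w)
    (by rw [Finset.nonempty_Icc]; omega)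
  simp only [Finset.mem_Icc] at hv
  have hmax' : ∀ w, c < w → w ≤ n → mn f c w ≤ mn f c v := fun w h1 h2 =>
    hmax w (by simp only [Finset.mem_Icc]; omega)
  have hcv : c < v := by omega
  refine ⟨v, hcv, hv.2, ?_, hmax', ?_⟩
  · rw [mem_CS]
    refine ⟨hv.2, ?_⟩
    intro a b ha hb hbn
    have h1 : mn f v b ≤ mn f c v := by
      have hcb := hmax' b (hcv.trans hb) hbn
      have key := mn_key f hcv hb
      nlinarith [cast_sub_pos hcv, cast_sub_pos hb]
    rcases lt_trichotomy a c with h | h | h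
    · have hcC := ((mem_CS n f c).1 hc).2 a v h hcv hv.2
      have key := mn_key f h hcv
      nlinarith [cast_sub_pos h, cast_sub_pos hcv,
        mul_le_mul_of_nonneg_left hcC (cast_sub_pos h).le]
    · rw [h]; exact h1
    · have hca : mn f c a ≤ mn f c v := hmax' a h (by omega)
      have key := mn_key f h ha
      nlinarith [cast_sub_pos h, cast_sub_pos ha]
  · intro j h1 h2 hj
    have hcond := ((mem_CS n f j).1 hj).2 c v h1 h2 hv.2
    have hle : mn f c j ≤ mn f c v := hmax' j h1 (by omega)
    have hne : mn f c j ≠ mn f c v := hD.mn_ne h1 (by omega) hcv hv.2 (Or.inr (by omega))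
    have hlt : mn f c j < mn f c v := lt_of_le_of_ne hle hne
    have key := mn_key f h1 h2
    nlinarith [cast_sub_pos h1, cast_sub_pos h2,
      mul_pos (cast_sub_pos h1) (sub_pos.2 hlt)]

lemma Bm_of (hLpos : ∀ x ∈ L, 0 < x) (hLsum : L.sum = n) (hD : Dg n f)
    (hT : ∀ i ≤ L.length, Pp L i ∈ CS n f) : Bm L f := by
  intro i hi
  have hP01 : Pp L i < Pp L (i+1) := Pp_lt hLpos (lt_add_one i) (by omega)
  have hP12 : Pp L (i+1) < Pp L (i+2) := Pp_lt hLpos (lt_add_one (i+1)) (by omega)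
  have h1 := ((mem_CS n f (Pp L (i+1))).1 (hT (i+1) (by omega))).2 (Pp L i) (Pp L (i+2))
    hP01 hP12 (Pp_le_n hLsum (i+2))
  have hne : mn f (Pp L (i+1)) (Pp L (i+2)) ≠ mn f (Pp L i) (Pp L (i+1)) :=
    hD.mn_ne hP12 (Pp_le_n hLsum (i+2)) hP01 (Pp_le_n hLsum (i+1)) (Or.inl (by omega))
  exact lt_of_le_of_ne h1 hne

lemma Vg_of (hLpos : ∀ x ∈ L, 0 < x) (hLsum : L.sum = n) (hD : Dg n f)
    (hC : CS n f = Tset L) : ∀ i < L.length, Vg L i f := by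
  intro i hi
  have hPiC : Pp L i ∈ CS n f := by rw [hC]; exact ⟨i, hi.le, rfl⟩
  have hPin : Pp L i < n := by
    rw [← hLsum, ← Pp_len]; exact Pp_lt hLpos hi le_rfl
  obtain ⟨v, hv1, hv2, hvC, hvmax, hvnone⟩ := greedy hD hPiC hPin
  have hP1C : Pp L (i+1) ∈ CS n f := by rw [hC]; exact ⟨i+1, by omega, rfl⟩
  have hP1 : Pp L i < Pp L (i+1) := Pp_lt hLpos (lt_add_one i) (by omega)
  have hvP1 : v = Pp L (i+1) := by
    rcases lt_trichotomy v (Pp L (i+1)) with h | h | h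
    · exfalso
      rw [hC] at hvC
      obtain ⟨s, hs, rfl⟩ := hvC
      rcases le_or_gt s i with h' | h'
      · have := Pp_mono (L := L) h'; omega
      · have := Pp_mono (L := L) (show i + 1 ≤ s by omega); omega
    · exact h
    · exact absurd hP1C (hvnone (Pp L (i+1)) hP1 h)
  intro j hj1 hj2
  have hjn : j ≤ n := le_trans hj2.le (Pp_le_n hLsum (i+1))
  have hle := hvmax j hj1 hjn
  rw [hvP1] at hle
  have hne : mn f (Pp L i) j ≠ mn f (Pp L i) (Pp L (i+1)) :=
    hD.mn_ne hj1 hjn hP1 (Pp_le_n hLsum (i+1)) (Or.inr (by omega))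
  exact lt_of_le_of_ne hle hne

/-- deterministic core: the contact set equals the block boundaries iff the block
slopes decrease and each block stays strictly below its chord -/
theorem CS_eq_iff (hLpos : ∀ x ∈ L, 0 < x) (hLsum : L.sum = n) (hD : Dg n f) :
    CS n f = Tset L ↔ (Bm L f ∧ ∀ i < L.length, Vg L i f) := by
  constructor
  · intro hC
    refine ⟨Bm_of hLpos hLsum hD (fun i hik => ?_), Vg_of hLpos hLsum hD hC⟩
    · rw [hC]; exact ⟨i, hik, rfl⟩
  · rintro ⟨hB, hV⟩
    exact CS_eq_of hLpos hLsum hB hV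

end Det

/-- abstract cycle lemma: a periodic sequence with distinct values on a period
has a unique strict-argmax starting point -/
lemma cycle_unique {m : ℕ} (hm : 0 < m) (T : ℕ → ℝ)
    (hper : ∀ r, T (r + m) = T r)
    (hdis : ∀ u v, u < v → v < m → T u ≠ T v) :
    ∃! s, s < m ∧ ∀ q, 0 < q → q < m → T (s + q) < T s := by
  obtain ⟨s, hsmem, hmax⟩ := Finset.exists_max_image (Finset.range m) T
    (by rw [Finset.nonempty_range_iff]; omega)
  rw [Finset.mem_range] at hsmem
  have hne : ∀ u, u < m → u ≠ s → T u < T s := by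
    intro u hu hus
    refine lt_of_le_of_ne (hmax u (Finset.mem_range.2 hu)) ?_
    rcases lt_or_gt_of_ne hus with h | h
    · exact hdis u s h hsmem
    · exact (hdis s u h hu).symm
  have hprop : ∀ q, 0 < q → q < m → T (s + q) < T s := by
    intro q hq1 hq2
    rcases lt_or_ge (s + q) m with h | h
    · exact hne (s + q) h (by omega)
    · have heq : T (s + q) = T (s + q - m) := by
        have h2 := hper (s + q - m)
        rw [show s + q - m + m = s + q by omega] at h2
        exact h2
      rw [heq]
      exact hne (s + q - m) (by omega) (by omega)
  refine ⟨s, ⟨hsmem, hprop⟩, ?_⟩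
  rintro t ⟨htm, htprop⟩
  by_contra hts
  have hkey : ∀ u v, u < v → v < m → (∀ q, 0 < q → q < m → T (u + q) < T u) →
      (∀ q, 0 < q → q < m → T (v + q) < T v) → False := by
    intro u v huv hv hu' hv'
    have h1 : T v < T u := by
      have := hu' (v - u) (by omega) (by omega)
      rwa [show u + (v - u) = v by omega] at this
    have h2 : T u < T v := by
      have := hv' (u + m - v) (by omega) (by omega)
      rwa [show v + (u + m - v) = u + m by omega, hper] at this
    linarith
  rcases lt_or_gt_of_ne hts with h | h
  · exact hkey t s h hsmem htprop hprop
  · exact hkey s t h htm hprop htprop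

/-- rotation by `s` on the block `[c+1, c+m]`, identity elsewhere -/
def rotFun (c m s : ℕ) (p : ℕ) : ℕ :=
  if c + 1 ≤ p ∧ p ≤ c + m then c + 1 + ((p - (c+1) + s) % m) else p

lemma rotFun_mem {c m s p : ℕ} (hm : 0 < m) (hp : c + 1 ≤ p ∧ p ≤ c + m) :
    c + 1 ≤ rotFun c m s p ∧ rotFun c m s p ≤ c + m := by
  rw [rotFun, if_pos hp]
  have := Nat.mod_lt (p - (c+1) + s) hm
  omega

lemma rotFun_notmem {c m s p : ℕ} (hp : ¬(c + 1 ≤ p ∧ p ≤ c + m)) :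
    rotFun c m s p = p := if_neg hp

lemma rotFun_comp {c m s1 s2 : ℕ} (hm : 0 < m) (hs : s1 + s2 = m) (p : ℕ) :
    rotFun c m s2 (rotFun c m s1 p) = p := by
  by_cases hp : c + 1 ≤ p ∧ p ≤ c + m
  · have h1 := rotFun_mem (s := s1) hm hp
    rw [rotFun, if_pos h1, rotFun, if_pos hp]
    have ht : p - (c + 1) < m := by omega
    have e1 : c + 1 + (p - (c + 1) + s1) % m - (c + 1) = (p - (c + 1) + s1) % m := by omega
    rw [e1, Nat.mod_add_mod, show p - (c+1) + s1 + s2 = (p - (c+1)) + m by omega,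
      Nat.add_mod_right, Nat.mod_eq_of_lt ht]
    omega
  · rw [rotFun_notmem hp, rotFun_notmem hp]

/-- the rotation as a permutation of `ℕ` -/
def rotPerm (c m s : ℕ) (hm : 0 < m) (hs : s ≤ m) : Equiv.Perm ℕ where
  toFun := rotFun c m s
  invFun := rotFun c m (m - s)
  left_inv := rotFun_comp hm (by omega)
  right_inv := rotFun_comp hm (by omega)

/-- sums of the `m`-periodisation of the block values -/
noncomputable def Wb (f : ℕ → ℝ) (c m r : ℕ) : ℝ := ∑ t ∈ Finset.range r, f (c + 1 + t % m)

lemma Wb_succ (f : ℕ → ℝ) (c m r : ℕ) :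
    Wb f c m (r+1) = Wb f c m r + f (c + 1 + r % m) := Finset.sum_range_succ _ _

lemma Wb_per (f : ℕ → ℝ) (c m : ℕ) : ∀ r, Wb f c m (r + m) = Wb f c m r + Wb f c m m := by
  intro r
  induction r with
  | zero => simp [Wb]
  | succ r ih =>
    rw [show r + 1 + m = (r + m) + 1 by omega, Wb_succ, ih, Wb_succ,
      Nat.add_mod_right]
    ring

lemma Wb_eq_blocksum (f : ℕ → ℝ) (c m : ℕ) :
    Wb f c m m = ∑ l ∈ Finset.Icc (c+1) (c+m), f l := by
  rw [Wb, show Finset.Icc (c+1) (c+m) = Finset.Ico (c+1) (c+m+1) by rw [Finset.Ico_add_one_right_eq_Icc],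
    Finset.sum_Ico_eq_sum_range]
  rw [show c + m + 1 - (c+1) = m by omega]
  apply Finset.sum_congr rfl
  intro t ht
  rw [Finset.mem_range] at ht
  rw [Nat.mod_eq_of_lt ht]

lemma rot_sum_prefix (f : ℕ → ℝ) (c m s : ℕ) :
    ∀ q, q ≤ m → ∑ l ∈ Finset.Icc (c+1) (c+q), f (rotFun c m s l)
      = Wb f c m (s + q) - Wb f c m s := by
  intro q
  induction q with
  | zero => simp [Wb]
  | succ q ih =>
    intro hq
    rw [show c + (q+1) = (c + q) + 1 by omega,
      Finset.sum_Icc_succ_top (by omega), ih (by omega)]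
    have hmem : c + 1 ≤ c + q + 1 ∧ c + q + 1 ≤ c + m := by omega
    rw [rotFun, if_pos hmem, show c + q + 1 - (c+1) = q by omega,
      show s + (q+1) = (s + q) + 1 by omega, Wb_succ,
      show q + s = s + q by omega]
    ring


noncomputable def Tb (f : ℕ → ℝ) (c m r : ℕ) : ℝ := Wb f c m r - r * (Wb f c m m / (m:ℝ))

/-- per-block "strictly below the chord" condition -/
def BV (f : ℕ → ℝ) (c m : ℕ) : Prop :=
  ∀ q, 0 < q → q < m → mn f c (c+q) < mn f c (c+m)

lemma mn_rot (f : ℕ → ℝ) (c m s q : ℕ) (hq : q ≤ m) :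
    mn (fun p => f (rotFun c m s p)) c (c+q)
      = (Wb f c m (s+q) - Wb f c m s) / (q:ℝ) := by
  rw [mn, sub_pS _ (Nat.le_add_right c q), rot_sum_prefix f c m s q hq]
  congr 1
  push_cast
  ring

lemma sub_Wb (f : ℕ → ℝ) (c m : ℕ) {u v : ℕ} (huv : u ≤ v) (hv : v ≤ m) :
    Wb f c m v - Wb f c m u = ∑ l ∈ Finset.Icc (c+1+u) (c+v), f l := by
  rw [Wb, Wb, eq_comm, ← Finset.sum_Ico_eq_sub _ huv,
    show Finset.Icc (c+1+u) (c+v) = Finset.Ico (c+1+u) (c+v+1) by rw [Finset.Ico_add_one_right_eq_Icc],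
    Finset.sum_Ico_eq_sum_range, Finset.sum_Ico_eq_sum_range]
  rw [show c + v + 1 - (c+1+u) = v - u by omega]
  apply Finset.sum_congr rfl
  intro t ht
  rw [Finset.mem_range] at ht
  rw [Nat.mod_eq_of_lt (by omega : u + t < m)]
  congr 1
  omega

lemma Tb_ne {n : ℕ} {f : ℕ → ℝ} {c m : ℕ} (hD : Dg n f) (hm : 0 < m) (hbl : c + m ≤ n)
    {u v : ℕ} (huv : u < v) (hv : v < m) : Tb f c m u ≠ Tb f c m v := by
  intro h
  have hsum : Wb f c m v - Wb f c m u = ∑ l ∈ Finset.Icc (c+1+u) (c+v), f l :=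
    sub_Wb f c m huv.le (by omega)
  have hblock : Wb f c m m = ∑ l ∈ Finset.Icc (c+1) (c+m), f l := Wb_eq_blocksum f c m
  have hne := hD (Finset.Icc (c+1+u) (c+v)) (Finset.Icc (c+1) (c+m))
    (by intro x hx; simp only [Finset.mem_Icc] at hx ⊢; omega)
    (by intro x hx; simp only [Finset.mem_Icc] at hx ⊢; omega)
    (by rw [Finset.nonempty_Icc]; omega)
    (by rw [Finset.nonempty_Icc]; omega)
    (by
      intro he
      have h1 : c + 1 + u ∈ Finset.Icc (c+1) (c+m) := by
        rw [← he]; simp only [Finset.mem_Icc]; omega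
      have h2 : c + m ∈ Finset.Icc (c+1+u) (c+v) := by
        rw [he]; simp only [Finset.mem_Icc]; omega
      simp only [Finset.mem_Icc] at h1 h2
      omega)
  apply hne
  rw [Nat.card_Icc, Nat.card_Icc, ← hsum, ← hblock,
    show c + v + 1 - (c+1+u) = v - u by omega, show c + m + 1 - (c+1) = m by omega]
  have hvu : (0:ℝ) < ((v - u : ℕ) : ℝ) := by
    have : 0 < v - u := by omega
    exact_mod_cast this
  have hm' : (0:ℝ) < (m:ℝ) := by exact_mod_cast hm
  rw [div_eq_div_iff hvu.ne' hm'.ne']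
  have he1 : Wb f c m v - Wb f c m u = ((v:ℝ) - u) * (Wb f c m m / m) := by
    unfold Tb at h
    have hc : ((v - u : ℕ) : ℝ) = (v:ℝ) - u := by
      rw [Nat.cast_sub huv.le]
    nlinarith [h]
  rw [he1, Nat.cast_sub huv.le]
  field_simp

lemma key_iff {f : ℕ → ℝ} {c m : ℕ} (s q : ℕ) (hq : 0 < q) :
    ((Wb f c m (s+q) - Wb f c m s) / (q:ℝ) < Wb f c m m / (m:ℝ))
      ↔ Tb f c m (s+q) < Tb f c m s := by
  have hq' : (0:ℝ) < (q:ℝ) := by exact_mod_cast hq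
  rw [div_lt_iff₀ hq']
  unfold Tb
  rw [Nat.cast_add]
  constructor <;> intro h <;> nlinarith [h]

lemma BV_rot_iff {f : ℕ → ℝ} {c m : ℕ} (hm : 0 < m) (s : ℕ) :
    BV (fun p => f (rotFun c m s p)) c m
      ↔ ∀ q, 0 < q → q < m → Tb f c m (s+q) < Tb f c m s := by
  unfold BV
  have hmn : ∀ q, 0 < q → q < m →
      ((mn (fun p => f (rotFun c m s p)) c (c+q)
        < mn (fun p => f (rotFun c m s p)) c (c+m))
        ↔ Tb f c m (s+q) < Tb f c m s) := by
    intro q h1 h2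
    rw [mn_rot f c m s q h2.le, mn_rot f c m s m le_rfl, Wb_per,
      show Wb f c m s + Wb f c m m - Wb f c m s = Wb f c m m by ring]
    exact key_iff s q h1
  constructor
  · intro h q h1 h2; exact (hmn q h1 h2).1 (h q h1 h2)
  · intro h q h1 h2; exact (hmn q h1 h2).2 (h q h1 h2)

/-- the unique rotation of a block making it lie strictly below its chord -/
lemma exists_unique_rot {n : ℕ} {f : ℕ → ℝ} {c m : ℕ} (hD : Dg n f) (hm : 0 < m)
    (hbl : c + m ≤ n) :
    ∃! s, s < m ∧ BV (fun p => f (rotFun c m s p)) c m := by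
  obtain ⟨s, ⟨hs1, hs2⟩, huniq⟩ := cycle_unique hm (Tb f c m)
    (fun r => by
      unfold Tb
      rw [Wb_per]
      have hm0 : (m:ℝ) ≠ 0 := by positivity
      push_cast
      field_simp
      ring)
    (fun u v huv hv => Tb_ne hD hm hbl huv hv)
  refine ⟨s, ⟨hs1, (BV_rot_iff hm s).2 hs2⟩, ?_⟩
  rintro t ⟨ht1, ht2⟩
  exact huniq t ⟨ht1, (BV_rot_iff hm t).1 ht2⟩

lemma mn_congr' {f g : ℕ → ℝ} {a b : ℕ} (hab : a ≤ b)
    (h : ∀ l, a + 1 ≤ l → l ≤ b → f l = g l) : mn f a b = mn g a b := by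
  rw [mn, mn, sub_pS f hab, sub_pS g hab]
  congr 1
  apply Finset.sum_congr rfl
  intro l hl
  rw [Finset.mem_Icc] at hl
  exact h l hl.1 hl.2

lemma perm_maps {n : ℕ} (σ : Equiv.Perm ℕ) (hσ : ∀ p, p ∉ Finset.Icc 1 n → σ p = p) :
    ∀ p ∈ Finset.Icc 1 n, σ p ∈ Finset.Icc 1 n := by
  intro p hp
  by_contra h
  have h2 := hσ (σ p) h
  have h3 : σ p = p := σ.injective h2
  rw [h3] at h
  exact h hp

lemma Dg_perm {n : ℕ} {f : ℕ → ℝ} (σ : Equiv.Perm ℕ)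
    (hσ : ∀ p, p ∉ Finset.Icc 1 n → σ p = p) (hD : Dg n f) :
    Dg n (fun p => f (σ p)) := by
  intro S T hS hT hSn hTn hST
  have key : ∀ U : Finset ℕ, ∑ i ∈ U, f (σ i) = ∑ i ∈ U.image σ, f i := by
    intro U
    rw [Finset.sum_image (fun x _ y _ h => σ.injective h)]
  have hcS : (S.image σ).card = S.card := Finset.card_image_of_injective S σ.injective
  have hcT : (T.image σ).card = T.card := Finset.card_image_of_injective T σ.injective
  have := hD (S.image σ) (T.image σ)
    (by
      intro x hx
      rw [Finset.mem_image] at hx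
      obtain ⟨y, hy, rfl⟩ := hx
      exact perm_maps σ hσ y (hS hy))
    (by
      intro x hx
      rw [Finset.mem_image] at hx
      obtain ⟨y, hy, rfl⟩ := hx
      exact perm_maps σ hσ y (hT hy))
    (hSn.image σ) (hTn.image σ)
    (fun h => hST (Finset.image_injective σ.injective h))
  rw [key S, key T, ← hcS, ← hcT]
  exact this

lemma Dg_perm_iff {n : ℕ} {f : ℕ → ℝ} (σ : Equiv.Perm ℕ)
    (hσ : ∀ p, p ∉ Finset.Icc 1 n → σ p = p) :
    Dg n (fun p => f (σ p)) ↔ Dg n f := by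
  constructor
  · intro h
    have hσ' : ∀ p, p ∉ Finset.Icc 1 n → σ.symm p = p := by
      intro p hp
      have := congrArg σ.symm (hσ p hp)
      rw [Equiv.symm_apply_apply] at this
      exact this.symm
    have h2 := Dg_perm σ.symm hσ' h
    have he : (fun p => (fun q => f (σ q)) (σ.symm p)) = f := by
      funext p
      simp
    rwa [he] at h2
  · exact Dg_perm σ hσ

section RotInv

variable {n : ℕ} {L : List ℕ} {f : ℕ → ℝ} {i s : ℕ}

lemma mn_rot_block {c m : ℕ} (f : ℕ → ℝ) (s : ℕ) :
    mn (fun p => f (rotFun c m s p)) c (c+m) = mn f c (c+m) := by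
  rw [mn, mn, sub_pS _ (Nat.le_add_right c m), sub_pS f (Nat.le_add_right c m),
    rot_sum_prefix f c m s m le_rfl, Wb_per, ← Wb_eq_blocksum]
  ring_nf

lemma blockmean_rot (hLpos : ∀ x ∈ L, 0 < x) (hi : i < L.length) {j : ℕ} (hj : j < L.length) :
    mn (fun p => f (rotFun (Pp L i) (nb L i) s p)) (Pp L j) (Pp L (j+1))
      = mn f (Pp L j) (Pp L (j+1)) := by
  rcases eq_or_ne j i with rfl | hne
  · rw [Pp_succ hi]
    exact mn_rot_block f s
  · apply mn_congr' (Pp_mono (by omega))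
    intro l h1 h2
    rw [rotFun_notmem]
    rw [show Pp L i + nb L i = Pp L (i+1) from (Pp_succ hi).symm]
    rcases lt_or_gt_of_ne hne with h | h
    · have := Pp_mono (L := L) (show j + 1 ≤ i by omega)
      omega
    · have := Pp_mono (L := L) (show i + 1 ≤ j by omega)
      omega

lemma Bm_rot (hLpos : ∀ x ∈ L, 0 < x) (hi : i < L.length) :
    Bm L (fun p => f (rotFun (Pp L i) (nb L i) s p)) ↔ Bm L f := by
  constructor <;> intro h j hj
  · have h2 := h j hj
    rwa [blockmean_rot hLpos hi (by omega : j + 1 < L.length),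
      blockmean_rot hLpos hi (by omega : j < L.length)] at h2
  · rw [blockmean_rot hLpos hi (by omega : j + 1 < L.length),
      blockmean_rot hLpos hi (by omega : j < L.length)]
    exact h j hj

lemma mn_rot_out (hi : i < L.length) {j a b : ℕ} (hne : j ≠ i) (hj : j < L.length)
    (ha : Pp L j ≤ a) (hb : b ≤ Pp L (j+1)) (hab : a ≤ b) :
    mn (fun p => f (rotFun (Pp L i) (nb L i) s p)) a b = mn f a b := by
  apply mn_congr' hab
  intro l h1 h2
  rw [rotFun_notmem]
  rw [show Pp L i + nb L i = Pp L (i+1) from (Pp_succ hi).symm]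
  rcases lt_or_gt_of_ne hne with h | h
  · have := Pp_mono (L := L) (show j + 1 ≤ i by omega)
    omega
  · have := Pp_mono (L := L) (show i + 1 ≤ j by omega)
    omega

lemma Vg_rot_ne (hi : i < L.length) {j : ℕ} (hne : j ≠ i) (hj : j < L.length) :
    Vg L j (fun p => f (rotFun (Pp L i) (nb L i) s p)) ↔ Vg L j f := by
  constructor <;> intro h t h1 h2
  · have h3 := h t h1 h2
    rwa [mn_rot_out hi hne hj le_rfl h2.le (by omega),
      mn_rot_out hi hne hj le_rfl le_rfl (by omega)] at h3
  · rw [mn_rot_out hi hne hj le_rfl h2.le (by omega),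
      mn_rot_out hi hne hj le_rfl le_rfl (by omega)]
    exact h t h1 h2

lemma Vg_eq_BV (hi : i < L.length) (g : ℕ → ℝ) :
    Vg L i g ↔ BV g (Pp L i) (nb L i) := by
  constructor
  · intro h q h1 h2
    have h3 := h (Pp L i + q) (by omega) (by rw [Pp_succ hi]; omega)
    rwa [Pp_succ hi] at h3
  · intro h j h1 h2
    rw [Pp_succ hi] at h2 ⊢
    have h3 := h (j - Pp L i) (by omega) (by omega)
    rwa [show Pp L i + (j - Pp L i) = j by omega] at h3

end RotInv

section Meas
open MeasureTheory

lemma meas_pS (j : ℕ) : Measurable (fun f : ℕ → ℝ => pS f j) :=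
  Finset.measurable_sum _ (fun i _ => measurable_pi_apply i)

lemma meas_mn (a b : ℕ) : Measurable (fun f : ℕ → ℝ => mn f a b) :=
  ((meas_pS b).sub (meas_pS a)).div_const _

lemma measSet_Dg (n : ℕ) : MeasurableSet {f : ℕ → ℝ | Dg n f} := by
  have he : {f : ℕ → ℝ | Dg n f} =
      ⋂ (S : Finset ℕ) (T : Finset ℕ) (_ : S ⊆ Finset.Icc 1 n) (_ : T ⊆ Finset.Icc 1 n)
        (_ : S.Nonempty) (_ : T.Nonempty) (_ : S ≠ T),
        {f : ℕ → ℝ | (∑ i ∈ S, f i) / (S.card : ℝ) ≠ (∑ i ∈ T, f i) / (T.card : ℝ)} := by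
    ext f
    simp only [Set.mem_iInter, Set.mem_setOf_eq]
    rfl
  rw [he]
  refine MeasurableSet.iInter fun S => MeasurableSet.iInter fun T => ?_
  refine MeasurableSet.iInter fun _ => MeasurableSet.iInter fun _ => ?_
  refine MeasurableSet.iInter fun _ => MeasurableSet.iInter fun _ => ?_
  refine MeasurableSet.iInter fun _ => ?_
  exact (measurableSet_eq_fun
    ((Finset.measurable_sum _ fun i _ => measurable_pi_apply i).div_const _)
    ((Finset.measurable_sum _ fun i _ => measurable_pi_apply i).div_const _)).compl

lemma measSet_Bm (L : List ℕ) : MeasurableSet {f : ℕ → ℝ | Bm L f} := by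
  have he : {f : ℕ → ℝ | Bm L f} = ⋂ (i : ℕ) (_ : i + 1 < L.length),
      {f : ℕ → ℝ | mn f (Pp L (i+1)) (Pp L (i+2)) < mn f (Pp L i) (Pp L (i+1))} := by
    ext f; simp only [Set.mem_iInter, Set.mem_setOf_eq]; rfl
  rw [he]
  refine MeasurableSet.iInter fun i => MeasurableSet.iInter fun _ => ?_
  exact measurableSet_lt (meas_mn _ _) (meas_mn _ _)

lemma measSet_Vg (L : List ℕ) (i : ℕ) : MeasurableSet {f : ℕ → ℝ | Vg L i f} := by
  have he : {f : ℕ → ℝ | Vg L i f} = ⋂ (j : ℕ) (_ : Pp L i < j) (_ : j < Pp L (i+1)),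
      {f : ℕ → ℝ | mn f (Pp L i) j < mn f (Pp L i) (Pp L (i+1))} := by
    ext f; simp only [Set.mem_iInter, Set.mem_setOf_eq]; rfl
  rw [he]
  refine MeasurableSet.iInter fun j => MeasurableSet.iInter fun _ =>
    MeasurableSet.iInter fun _ => ?_
  exact measurableSet_lt (meas_mn _ _) (meas_mn _ _)

/-- the nested events: generic position, decreasing block slopes, and the first `i`
blocks below their chords -/
def US (n : ℕ) (L : List ℕ) (i : ℕ) : Set (ℕ → ℝ) :=
  {f | Dg n f ∧ Bm L f ∧ ∀ j < i, Vg L j f}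

lemma measSet_US (n : ℕ) (L : List ℕ) (i : ℕ) : MeasurableSet (US n L i) := by
  have he : US n L i
      = {f | Dg n f} ∩ ({f | Bm L f} ∩ ⋂ (j : ℕ) (_ : j < i), {f : ℕ → ℝ | Vg L j f}) := by
    ext f
    simp only [US, Set.mem_inter_iff, Set.mem_iInter, Set.mem_setOf_eq]
  rw [he]
  exact (measSet_Dg n).inter ((measSet_Bm L).inter
    (MeasurableSet.iInter fun j => MeasurableSet.iInter fun _ => measSet_Vg L j))

end Meas

section RotStep

variable {n : ℕ} {L : List ℕ} {i : ℕ}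

lemma rot_fix_outside (hLsum : L.sum = n) (hi : i < L.length) (s : ℕ) :
    ∀ p, p ∉ Finset.Icc 1 n → rotFun (Pp L i) (nb L i) s p = p := by
  intro p hp
  apply rotFun_notmem
  rw [Finset.mem_Icc, not_and_or] at hp
  have hble : Pp L i + nb L i ≤ n := by
    rw [← Pp_succ hi]
    exact Pp_le_n hLsum (i+1)
  push_neg at hp
  omega

lemma US_rot_iff (hLpos : ∀ x ∈ L, 0 < x) (hLsum : L.sum = n) (hi : i < L.length)
    {s : ℕ} (hs : s < nb L i) (f : ℕ → ℝ) :
    ((fun p => f (rotFun (Pp L i) (nb L i) s p)) ∈ US n L (i+1))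
      ↔ (f ∈ US n L i ∧ Vg L i (fun p => f (rotFun (Pp L i) (nb L i) s p))) := by
  have hm : 0 < nb L i := nb_pos hLpos hi
  have hσ := rot_fix_outside hLsum hi s
  have hDiff : Dg n (fun p => f (rotFun (Pp L i) (nb L i) s p)) ↔ Dg n f :=
    Dg_perm_iff (f := f) (rotPerm (Pp L i) (nb L i) s hm hs.le) hσ
  have hBiff : Bm L (fun p => f (rotFun (Pp L i) (nb L i) s p)) ↔ Bm L f :=
    Bm_rot hLpos hi
  constructor
  · rintro ⟨h1, h2, h3⟩
    refine ⟨⟨hDiff.1 h1, hBiff.1 h2, fun j hj => ?_⟩, h3 i (lt_add_one i)⟩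
    exact (Vg_rot_ne hi (by omega) (by omega)).1 (h3 j (by omega))
  · rintro ⟨⟨h1, h2, h3⟩, h4⟩
    refine ⟨hDiff.2 h1, hBiff.2 h2, fun j hj => ?_⟩
    rcases eq_or_ne j i with rfl | hne
    · exact h4
    · exact (Vg_rot_ne hi hne (by omega)).2 (h3 j (by omega))

open MeasureTheory in
lemma step {Ω : Type*} [MeasurableSpace Ω] (μ : Measure Ω)
    (X : ℕ → Ω → ℝ) (hmeas : ∀ p, Measurable (X p))
    (hexch : ∀ σ : Equiv.Perm ℕ, (∀ p, p ∉ Finset.Icc 1 n → σ p = p) →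
      Measure.map (fun ω (p : ℕ) => X (σ p) ω) μ = Measure.map (fun ω (p : ℕ) => X p ω) μ)
    (hLpos : ∀ x ∈ L, 0 < x) (hLsum : L.sum = n) (hi : i < L.length) :
    μ ((fun ω (p : ℕ) => X p ω) ⁻¹' US n L i)
      = (nb L i : ENNReal) * μ ((fun ω (p : ℕ) => X p ω) ⁻¹' US n L (i+1)) := by
  classical
  set c := Pp L i with hc
  set m := nb L i with hmdef
  have hm : 0 < m := nb_pos hLpos hi
  have hbl : c + m ≤ n := by
    rw [hc, hmdef, ← Pp_succ hi]
    exact Pp_le_n hLsum (i+1)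
  have hmeasrot : ∀ s : ℕ, Measurable (fun ω (p : ℕ) => X (rotFun c m s p) ω) :=
    fun s => measurable_pi_lambda _ (fun p => hmeas (rotFun c m s p))
  -- decomposition into a disjoint union
  have hdecomp : (fun ω (p : ℕ) => X p ω) ⁻¹' US n L i
      = ⋃ s ∈ Finset.range m, (fun ω (p : ℕ) => X (rotFun c m s p) ω) ⁻¹' US n L (i+1) := by
    ext ω
    simp only [Set.mem_preimage, Set.mem_iUnion, Finset.mem_range]
    constructor
    · intro hU
      obtain ⟨s, ⟨hs, hBV⟩, _⟩ := exists_unique_rot (f := fun p => X p ω) hU.1 hm hbl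
      exact ⟨s, hs, (US_rot_iff hLpos hLsum hi hs (fun p => X p ω)).2
        ⟨hU, (Vg_eq_BV hi _).2 hBV⟩⟩
    · rintro ⟨s, hs, hUS⟩
      exact ((US_rot_iff hLpos hLsum hi hs (fun p => X p ω)).1 hUS).1
  rw [hdecomp]
  rw [measure_biUnion_finset ?hdisj (fun s _ => (hmeasrot s) (measSet_US n L (i+1)))]
  case hdisj =>
    intro s hs t ht hst
    rw [Finset.mem_coe, Finset.mem_range] at hs ht
    rw [Function.onFun, Set.disjoint_left]
    intro ω hsω htω
    rw [Set.mem_preimage] at hsω htω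
    have h1 := (US_rot_iff hLpos hLsum hi hs (fun p => X p ω)).1 hsω
    have h2 := (US_rot_iff hLpos hLsum hi ht (fun p => X p ω)).1 htω
    obtain ⟨w, hw, huniq⟩ := exists_unique_rot (f := fun p => X p ω) h1.1.1 hm hbl
    have e1 : s = w := huniq s ⟨hs, (Vg_eq_BV hi _).1 h1.2⟩
    have e2 : t = w := huniq t ⟨ht, (Vg_eq_BV hi _).1 h2.2⟩
    exact hst (e1.trans e2.symm)
  have hsame : ∀ s ∈ Finset.range m,
      μ ((fun ω (p : ℕ) => X (rotFun c m s p) ω) ⁻¹' US n L (i+1))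
        = μ ((fun ω (p : ℕ) => X p ω) ⁻¹' US n L (i+1)) := by
    intro s hs
    rw [Finset.mem_range] at hs
    have h1 : Measurable (fun ω (p : ℕ) => X (rotFun c m s p) ω) := hmeasrot s
    have h2 : Measurable (fun ω (p : ℕ) => X p ω) :=
      measurable_pi_lambda _ (fun p => hmeas p)
    have hmap := hexch (rotPerm c m s hm hs.le) (rot_fix_outside hLsum hi s)
    calc μ ((fun ω (p : ℕ) => X (rotFun c m s p) ω) ⁻¹' US n L (i+1))
        = (Measure.map (fun ω (p : ℕ) => X (rotFun c m s p) ω) μ) (US n L (i+1)) := by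
          rw [Measure.map_apply h1 (measSet_US n L (i+1))]
      _ = (Measure.map (fun ω (p : ℕ) => X p ω) μ) (US n L (i+1)) := by rw [← hmap]; rfl
      _ = μ ((fun ω (p : ℕ) => X p ω) ⁻¹' US n L (i+1)) := by
          rw [Measure.map_apply h2 (measSet_US n L (i+1))]
  rw [Finset.sum_congr rfl hsame, Finset.sum_const, Finset.card_range, nsmul_eq_mul]

end RotStep

section Final
open MeasureTheory

lemma prod_nb (L : List ℕ) : ∏ j ∈ Finset.range L.length, nb L j = L.prod := by
  induction L with
  | nil => simp
  | cons a L ih =>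
    rw [List.length_cons, Finset.prod_range_succ', List.prod_cons]
    have h1 : ∀ j, nb (a :: L) (j+1) = nb L j := fun j => rfl
    have h0 : nb (a :: L) 0 = a := rfl
    rw [h0, Finset.prod_congr rfl fun j _ => h1 j, ih, mul_comm]

lemma do_eq_map (L : List ℕ) :
    (do let a ← L; pure ((a : ℝ)) : List ℝ) = L.map (fun a : ℕ => (a : ℝ)) := by
  simp only [bind_pure_comp, List.map_eq_map]

lemma prod_map_one_div (L : List ℕ) :
    (L.map (fun m : ℕ => (1:ℝ)/m)).prod = ((L.prod : ℕ) : ℝ)⁻¹ := by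
  induction L with
  | nil => simp
  | cons a L ih =>
    rw [List.map_cons, List.prod_cons, ih, List.prod_cons]
    push_cast
    rw [mul_inv, one_div]

lemma mn_eq_block {L : List ℕ} {j : ℕ} (hj : j < L.length) (f : ℕ → ℝ) :
    mn f (Pp L j) (Pp L (j+1))
      = (∑ l ∈ Finset.Icc (Pp L j + 1) (Pp L (j+1)), f l) / (L.getD j 0 : ℝ) := by
  have hab : Pp L j ≤ Pp L (j+1) := Pp_mono (Nat.le_succ j)
  rw [mn, sub_pS f hab]
  congr 1
  have hnb : nb L j = L.getD j 0 := rfl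
  rw [Pp_succ hj, ← hnb]
  push_cast
  ring

lemma iterate {Ω : Type*} [MeasurableSpace Ω] (μ : Measure Ω) {n : ℕ} {L : List ℕ}
    (X : ℕ → Ω → ℝ) (hmeas : ∀ p, Measurable (X p))
    (hexch : ∀ σ : Equiv.Perm ℕ, (∀ p, p ∉ Finset.Icc 1 n → σ p = p) →
      Measure.map (fun ω (p : ℕ) => X (σ p) ω) μ = Measure.map (fun ω (p : ℕ) => X p ω) μ)
    (hLpos : ∀ x ∈ L, 0 < x) (hLsum : L.sum = n) :
    μ ((fun ω (p : ℕ) => X p ω) ⁻¹' US n L 0)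
      = (L.prod : ENNReal) * μ ((fun ω (p : ℕ) => X p ω) ⁻¹' US n L L.length) := by
  have key : ∀ d i, i + d = L.length →
      μ ((fun ω (p : ℕ) => X p ω) ⁻¹' US n L i)
        = ((∏ j ∈ Finset.Ico i L.length, nb L j : ℕ) : ENNReal)
            * μ ((fun ω (p : ℕ) => X p ω) ⁻¹' US n L L.length) := by
    intro d
    induction d with
    | zero =>
      intro i hi
      have : i = L.length := by omega
      subst this
      simp
    | succ d ih =>
      intro i hi
      rw [step μ X hmeas hexch hLpos hLsum (by omega), ih (i+1) (by omega), ← mul_assoc]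
      congr 1
      rw [← Nat.cast_mul]
      congr 1
      rw [Finset.prod_eq_prod_Ico_succ_bot (by omega : i < L.length)]
  have h := key L.length 0 (by omega)
  rw [h]
  congr 2
  rw [← Finset.range_eq_Ico]
  exact prod_nb L

end Final

end Stmt5X

/-- For exchangeable increments `X_1,...,X_n` with a.s. no two distinct nonempty subsets
of equal arithmetic mean: the probability that the composition of `n` induced by the face
lengths of the concave majorant is `(n_1,...,n_k)` (encoded by the list `L`; equivalently,
the set of points where the walk meets its concave majorant equals the set of partial sums
of `L`) equals `P(slopes of the k blocks strictly decreasing) · ∏ 1/n_i`. -/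
theorem stmt_5 {Ω : Type*} [MeasurableSpace Ω] (μ : Measure Ω) [IsProbabilityMeasure μ]
    (n : ℕ) (hn : 0 < n) (X : ℕ → Ω → ℝ) (hmeas : ∀ i, Measurable (X i))
    (hexch : ∀ σ : Equiv.Perm ℕ, (∀ i, i ∉ Finset.Icc 1 n → σ i = i) →
      Measure.map (fun ω (i : ℕ) => X (σ i) ω) μ = Measure.map (fun ω (i : ℕ) => X i ω) μ)
    (hA : μ {ω | ∃ S T : Finset ℕ, S ⊆ Finset.Icc 1 n ∧ T ⊆ Finset.Icc 1 n ∧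
        S.Nonempty ∧ T.Nonempty ∧ S ≠ T ∧
        (∑ i ∈ S, X i ω) / S.card = (∑ i ∈ T, X i ω) / T.card} = 0)
    (L : List ℕ) (hLpos : ∀ x ∈ L, 0 < x) (hLsum : L.sum = n) :
    μ {ω | {j : ℕ | j ≤ n ∧ ∀ a b : ℕ, a ≤ j → j ≤ b → b ≤ n → a < b →
          ((b : ℝ) - j) * (∑ i ∈ Finset.Icc 1 a, X i ω)
            + ((j : ℝ) - a) * (∑ i ∈ Finset.Icc 1 b, X i ω)
            ≤ ((b : ℝ) - a) * (∑ i ∈ Finset.Icc 1 j, X i ω)}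
        = {m : ℕ | ∃ i ≤ L.length, m = (L.take i).sum}}
      = μ {ω | ∀ i : ℕ, i + 1 < L.length →
            (∑ l ∈ Finset.Icc ((L.take (i + 1)).sum + 1) ((L.take (i + 2)).sum), X l ω)
                / (L.getD (i + 1) 0)
              < (∑ l ∈ Finset.Icc ((L.take i).sum + 1) ((L.take (i + 1)).sum), X l ω)
                / (L.getD i 0)}
        * ENNReal.ofReal ((L.map (fun m => (1 : ℝ) / m)).prod) := by
  classical
  -- the a.s. generic-position event
  have hnull : μ {ω | ¬ Stmt5X.Dg n (fun p => X p ω)} = 0 := by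
    have he : {ω | ¬ Stmt5X.Dg n (fun p => X p ω)}
        = {ω | ∃ S T : Finset ℕ, S ⊆ Finset.Icc 1 n ∧ T ⊆ Finset.Icc 1 n ∧
            S.Nonempty ∧ T.Nonempty ∧ S ≠ T ∧
            (∑ i ∈ S, X i ω) / S.card = (∑ i ∈ T, X i ω) / T.card} := by
      ext ω
      simp only [Set.mem_setOf_eq, Stmt5X.Dg]
      push_neg
      rfl
    rw [he]
    exact hA
  have hDc : μ ({ω | Stmt5X.Dg n (fun p => X p ω)}ᶜ) = 0 := by
    rw [Set.compl_setOf]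
    exact hnull
  -- identify the left event
  have e1 : μ {ω | {j : ℕ | j ≤ n ∧ ∀ a b : ℕ, a ≤ j → j ≤ b → b ≤ n → a < b →
          ((b : ℝ) - j) * (∑ i ∈ Finset.Icc 1 a, X i ω)
            + ((j : ℝ) - a) * (∑ i ∈ Finset.Icc 1 b, X i ω)
            ≤ ((b : ℝ) - a) * (∑ i ∈ Finset.Icc 1 j, X i ω)}
        = {m : ℕ | ∃ i ≤ L.length, m = (L.take i).sum}}
      = μ ((fun ω (p : ℕ) => X p ω) ⁻¹' Stmt5X.US n L L.length) := by
    rw [← measure_inter_conull hDc]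
    congr 1
    ext ω
    simp only [Set.mem_inter_iff, Set.mem_setOf_eq, Set.mem_preimage, Stmt5X.US]
    constructor
    · rintro ⟨hC, hD⟩
      obtain ⟨hB, hV⟩ := (Stmt5X.CS_eq_iff hLpos hLsum hD).1 hC
      exact ⟨hD, hB, hV⟩
    · rintro ⟨hD, hB, hV⟩
      exact ⟨(Stmt5X.CS_eq_iff hLpos hLsum hD).2 ⟨hB, hV⟩, hD⟩
  -- identify the right event
  have e2 : μ {ω | ∀ i : ℕ, i + 1 < L.length →
            (∑ l ∈ Finset.Icc ((L.take (i + 1)).sum + 1) ((L.take (i + 2)).sum), X l ω)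
                / (L.getD (i + 1) 0)
              < (∑ l ∈ Finset.Icc ((L.take i).sum + 1) ((L.take (i + 1)).sum), X l ω)
                / (L.getD i 0)}
      = μ ((fun ω (p : ℕ) => X p ω) ⁻¹' Stmt5X.US n L 0) := by
    have he : {ω | ∀ i : ℕ, i + 1 < L.length →
            (∑ l ∈ Finset.Icc ((L.take (i + 1)).sum + 1) ((L.take (i + 2)).sum), X l ω)
                / (L.getD (i + 1) 0)
              < (∑ l ∈ Finset.Icc ((L.take i).sum + 1) ((L.take (i + 1)).sum), X l ω)
                / (L.getD i 0)}
        = {ω | Stmt5X.Bm L (fun p => X p ω)} := by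
      ext ω
      simp only [Set.mem_setOf_eq]
      constructor
      · intro h i hi
        rw [Stmt5X.mn_eq_block (show i + 1 < L.length from hi),
          Stmt5X.mn_eq_block (show i < L.length by omega)]
        exact h i hi
      · intro h i hi
        have h2 := h i hi
        rw [Stmt5X.mn_eq_block (show i + 1 < L.length from hi),
          Stmt5X.mn_eq_block (show i < L.length by omega)] at h2
        exact h2
    rw [he, ← measure_inter_conull hDc]
    congr 1
    ext ω
    simp only [Set.mem_inter_iff, Set.mem_setOf_eq, Set.mem_preimage, Stmt5X.US]
    constructor
    · rintro ⟨hB, hD⟩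
      exact ⟨hD, hB, fun j hj => absurd hj (Nat.not_lt_zero j)⟩
    · rintro ⟨hD, hB, _⟩
      exact ⟨hB, hD⟩
  rw [e1, e2, Stmt5X.iterate μ X hmeas hexch hLpos hLsum]
  have hdo := Stmt5X.do_eq_map L
  have hof : ENNReal.ofReal ((L.map (fun m => (1 : ℝ) / m)).prod)
      = ((L.prod : ℕ) : ENNReal)⁻¹ := by
    rw [hdo, List.map_map]
    have hcomp : ((fun m : ℝ => (1 : ℝ) / m) ∘ fun a : ℕ => (a : ℝ))
        = (fun m : ℕ => (1 : ℝ) / m) := rfl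
    rw [hcomp, Stmt5X.prod_map_one_div]
    have hpos : (0:ℝ) < ((L.prod : ℕ) : ℝ) := by
      have : 0 < L.prod := List.prod_pos hLpos
      exact_mod_cast this
    rw [ENNReal.ofReal_inv_of_pos hpos, ENNReal.ofReal_natCast]
  rw [hof]
  have hP0 : ((L.prod : ℕ) : ENNReal) ≠ 0 := by
    have : 0 < L.prod := List.prod_pos hLpos
    exact_mod_cast this.ne'
  have hPt : ((L.prod : ℕ) : ENNReal) ≠ ⊤ := ENNReal.natCast_ne_top _
  rw [mul_comm ((L.prod : ℕ) : ENNReal)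
    (μ ((fun ω (p : ℕ) => X p ω) ⁻¹' Stmt5X.US n L L.length)), mul_assoc,
    ENNReal.mul_inv_cancel hP0 hPt, mul_one]
end
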